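/- arXiv:math/9908145 — 2 statements merged into one kernel-verified Lean document; each statement's English description precedes it below -/
import Mathlib

section
/- Define \(G_i(a,b;c;x) := \sum_{k=0}^i \frac{(a)_k}{\Gamma(c+k)} L_{i-k}^{(-b-i-1)}(-x)\, L_k^{(b)}(x)\). Then for every nonnegative integer i and real a, c with \(a+1 \ne 0\) and \(a-c+2 \ne 0\): \(G_i(a+2,a;c;x) = \frac{1}{(a+1)(a-c+2)\Gamma(c+i)} \sum_{j=0}^i (-1)^j \binom{a-c+2}{j}\binom{a-c+2}{i-j}(a+1)_{i-j}\,[(a+1)(a-c+2)+j(i-j)]\, x^j\). -/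
open Finset

/-- Rising factorial (Pochhammer symbol) `(x)_k = x(x+1)⋯(x+k-1)`. -/
noncomputable def poch (x : ℝ) (k : ℕ) : ℝ := (ascPochhammer ℝ k).eval x

/-- Generalized binomial coefficient `C(y, m) = (y-m+1)_m / m!` for real `y`. -/
noncomputable def gbinom (y : ℝ) (m : ℕ) : ℝ := poch (y - m + 1) m / m.factorial

/-- Generalized binomial coefficient with integer lower index, zero for negative index. -/
noncomputable def gbinomZ (y : ℝ) (m : ℤ) : ℝ := if 0 ≤ m then gbinom y m.toNat else 0

/-- Generalized Laguerre polynomial `L_n^{(a)}(x)`, defined for all real `a`. -/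
noncomputable def Lag (n : ℕ) (a : ℝ) (x : ℝ) : ℝ :=
  ∑ k ∈ range (n + 1),
    (-1 : ℝ) ^ k * poch (a + k + 1) (n - k) / (n - k).factorial * x ^ k / k.factorial


lemma poch_zero (x : ℝ) : poch x 0 = 1 := by simp [poch]
lemma poch_succ (x : ℝ) (n : ℕ) : poch x (n+1) = poch x n * (x + n) := by
  simp [poch, ascPochhammer_succ_right]
lemma poch_succ' (x : ℝ) (n : ℕ) : poch x (n+1) = x * poch (x+1) n := by
  simp [poch, ascPochhammer_succ_left]
lemma poch_add (x : ℝ) (m n : ℕ) : poch x (m+n) = poch x m * poch (x+m) n := by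
  induction n with
  | zero => simp [poch_zero]
  | succ n ih => rw [← add_assoc, poch_succ, ih, poch_succ]; push_cast; ring
lemma poch_reflect (x : ℝ) (n : ℕ) : poch x n = (-1)^n * poch (-x - n + 1) n := by
  induction n generalizing x with
  | zero => simp [poch_zero]
  | succ n ih =>
    rw [poch_succ, ih, poch_succ' (-x - (n+1:ℕ) + 1)]
    push_cast; ring_nf

lemma inv_gamma_succ (z : ℝ) : (Real.Gamma z)⁻¹ = z * (Real.Gamma (z+1))⁻¹ := by
  rcases eq_or_ne z 0 with h|h
  · simp [h, Real.Gamma_zero]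
  · rw [Real.Gamma_add_one h, mul_inv, mul_inv_cancel_left₀ h]

lemma inv_gamma_poch (z : ℝ) (m : ℕ) : (Real.Gamma z)⁻¹ = poch z m * (Real.Gamma (z+m))⁻¹ := by
  induction m generalizing z with
  | zero => simp [poch_zero]
  | succ m ih =>
    rw [inv_gamma_succ, ih (z+1), poch_succ']
    push_cast; ring_nf

lemma cv (N : ℕ) (A C : ℝ) :
    ∑ s ∈ range (N+1), (-1:ℝ)^s * (N.choose s) * poch A s * poch (C+s) (N-s) = poch (C-A) N := by
  induction N generalizing A C with
  | zero => simp [poch_zero]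
  | succ N ih =>
    rw [Finset.sum_range_succ']
    have step1 : ∑ s ∈ range (N+1),
          (-1:ℝ)^(s+1) * ((N+1).choose (s+1)) * poch A (s+1) * poch (C+(↑(s+1))) (N+1-(s+1))
        = (∑ s ∈ range (N+1), -((-1:ℝ)^s * (N.choose s) * poch (A+1) s * poch ((C+1)+s) (N-s)) * A)
          + ∑ s ∈ range (N+1), (-1:ℝ)^(s+1) * (N.choose (s+1)) * poch A (s+1) * poch (C+(↑(s+1))) (N+1-(s+1)) := by
      rw [← Finset.sum_add_distrib]
      refine Finset.sum_congr rfl fun s hs => ?_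
      rw [Nat.choose_succ_succ, poch_succ' A s]
      have h1 : N+1-(s+1) = N - s := by omega
      have h3 : (C+(↑(s+1):ℝ)) = (C+1)+s := by push_cast; ring
      rw [h1, h3]
      push_cast
      ring
    rw [step1]
    have e1 : ∑ s ∈ range (N+1), -((-1:ℝ)^s * (N.choose s) * poch (A+1) s * poch ((C+1)+s) (N-s)) * A
        = -A * poch (C - A) N := by
      have := ih (A+1) (C+1)
      have harg : C + 1 - (A+1) = C - A := by ring
      rw [harg] at this
      rw [← Finset.sum_mul, ← this, Finset.sum_neg_distrib]
      ring
    have e2 : (∑ s ∈ range (N+1), (-1:ℝ)^(s+1) * (N.choose (s+1)) * poch A (s+1) * poch (C+(↑(s+1))) (N+1-(s+1)))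
          + (-1:ℝ)^0 * ((N+1).choose 0) * poch A 0 * poch (C+(0:ℕ)) (N+1-0)
        = ∑ s ∈ range (N+2), (-1:ℝ)^s * (N.choose s) * poch A s * poch (C+s) (N+1-s) := by
      rw [Finset.sum_range_succ' (fun s => (-1:ℝ)^s * (N.choose s) * poch A s * poch (C+s) (N+1-s)) (N+1)]
      simp [poch_zero]
    have e3 : ∑ s ∈ range (N+2), (-1:ℝ)^s * (N.choose s) * poch A s * poch (C+s) (N+1-s)
        = poch (C - A) N * (C + N) := by
      rw [Finset.sum_range_succ]
      simp only [Nat.choose_succ_self, Nat.cast_zero]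
      have e4 : ∑ s ∈ range (N+1), (-1:ℝ)^s * (N.choose s) * poch A s * poch (C+s) (N+1-s)
          = ∑ s ∈ range (N+1), ((-1:ℝ)^s * (N.choose s) * poch A s * poch (C+s) (N-s)) * (C + N) := by
        refine Finset.sum_congr rfl fun s hs => ?_
        have hs' : s ≤ N := by simpa [Nat.lt_succ_iff] using hs
        have h1 : N+1-s = (N-s)+1 := by omega
        rw [h1, poch_succ]
        rw [Nat.cast_sub hs']
        ring
      rw [e4, ← Finset.sum_mul, ih]
      ring
    rw [add_assoc, e2, e3, e1, poch_succ]
    push_cast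
    ring


lemma neg_one_pow_sub {m s : ℕ} (h : s ≤ m) : (-1:ℝ)^(m-s) = (-1)^m * (-1)^s := by
  have hm : m - s + (s + s) = m + s := by omega
  have : ((-1:ℝ))^(m-s) * (-1)^(s+s) = (-1)^m * (-1)^s := by
    rw [← pow_add, hm, pow_add]
  simpa [Even.neg_one_pow (⟨s, rfl⟩ : Even (s+s))] using this

lemma cv_div (N : ℕ) (A C : ℝ) :
    ∑ s ∈ range (N+1), (-1:ℝ)^s * poch A s * poch (C+s) (N-s) / (s.factorial * (N-s).factorial)
      = poch (C-A) N / N.factorial := by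
  rw [← cv N A C, Finset.sum_div]
  refine Finset.sum_congr rfl fun s hs => ?_
  have hs' : s ≤ N := by simpa [Nat.lt_succ_iff] using hs
  have hfact : ((N.choose s : ℝ)) * s.factorial * (N-s).factorial = N.factorial := by
    exact_mod_cast congrArg (Nat.cast : ℕ → ℝ) (Nat.choose_mul_factorial_mul_factorial hs')
  have h1 : (s.factorial : ℝ) ≠ 0 := Nat.cast_ne_zero.mpr s.factorial_ne_zero
  have h2 : ((N-s).factorial : ℝ) ≠ 0 := Nat.cast_ne_zero.mpr (N-s).factorial_ne_zero
  have h3 : (N.factorial : ℝ) ≠ 0 := Nat.cast_ne_zero.mpr N.factorial_ne_zero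
  field_simp
  linear_combination (-(poch A s * poch (C+(s:ℝ)) (N-s))) * hfact

lemma cv_div' (m : ℕ) (A C : ℝ) :
    ∑ s ∈ range (m+1), (-1:ℝ)^(m-s) * poch A s * poch (C+s) (m-s) / ((m-s).factorial * s.factorial)
      = poch (A - C - (m:ℝ) + 1) m / m.factorial := by
  have hrefl : poch (A - C - (m:ℝ) + 1) m = (-1:ℝ)^m * poch (C - A) m := by
    rw [poch_reflect (A - C - (m:ℝ) + 1) m]
    have h2 : -(A - C - (m:ℝ) + 1) - m + 1 = C - A := by ring
    rw [h2]
  rw [hrefl, mul_div_assoc, ← cv_div m A C, Finset.mul_sum]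
  refine Finset.sum_congr rfl fun s hs => ?_
  have hs' : s ≤ m := by simpa [Nat.lt_succ_iff] using hs
  rw [neg_one_pow_sub hs']
  ring

lemma gb_reflect (y : ℝ) (n : ℕ) : (-1:ℝ)^n * gbinom y n = poch (-y) n / n.factorial := by
  unfold gbinom
  rw [poch_reflect (y - n + 1) n]
  have : -(y - (n:ℝ) + 1) - n + 1 = -y := by ring
  rw [this]
  ring_nf
  have hsq : ((-1:ℝ)^n)^2 = 1 := by
    rw [← pow_mul, mul_comm, pow_mul]; norm_num
  simp [hsq]

lemma qsum_succ (j : ℕ) (B R C : ℝ) :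
    ∑ q ∈ range (j+2), (-1:ℝ)^q * (B+q) * poch R q * poch (C+q) (j+1-q) / (q.factorial * (j+1-q).factorial)
      = B * poch (C-R) (j+1) / (j+1).factorial - R * poch (C-R) j / j.factorial := by
  have split : ∀ q ∈ range (j+2),
      (-1:ℝ)^q * (B+q) * poch R q * poch (C+q) (j+1-q) / (q.factorial * (j+1-q).factorial)
      = B * ((-1:ℝ)^q * poch R q * poch (C+q) (j+1-q) / (q.factorial * (j+1-q).factorial))
        + (-1:ℝ)^q * q * poch R q * poch (C+q) (j+1-q) / (q.factorial * (j+1-q).factorial) := by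
    intro q hq; ring
  rw [Finset.sum_congr rfl split, Finset.sum_add_distrib, ← Finset.mul_sum, cv_div (j+1) R C]
  have e2 : ∑ q ∈ range (j+2), (-1:ℝ)^q * q * poch R q * poch (C+q) (j+1-q) / (q.factorial * (j+1-q).factorial)
      = - (R * poch (C-R) j / j.factorial) := by
    rw [Finset.sum_range_succ' (fun q => (-1:ℝ)^q * q * poch R q * poch (C+q) (j+1-q) / (q.factorial * (j+1-q).factorial)) (j+1)]
    have e3 : ∑ r ∈ range (j+1), (-1:ℝ)^(r+1) * (r+1:ℕ) * poch R (r+1) * poch (C+(r+1:ℕ)) (j+1-(r+1)) / ((r+1).factorial * (j+1-(r+1)).factorial)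
        = ∑ r ∈ range (j+1), -R * ((-1:ℝ)^r * poch (R+1) r * poch ((C+1)+r) (j-r) / (r.factorial * (j-r).factorial)) := by
      refine Finset.sum_congr rfl fun r hr => ?_
      have h1 : j+1-(r+1) = j - r := by omega
      rw [h1, poch_succ' R r, Nat.factorial_succ]
      have h3 : (C+((r+1:ℕ):ℝ)) = (C+1)+r := by push_cast; ring
      rw [h3]
      have h4 : ((r+1:ℕ):ℝ) = (r:ℝ)+1 := by push_cast; ring
      rw [h4]
      push_cast
      have h5 : ((r:ℝ)+1) ≠ 0 := by positivity
      field_simp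
      ring
    rw [e3, ← Finset.mul_sum, cv_div j (R+1) (C+1)]
    have : C + 1 - (R+1) = C - R := by ring
    rw [this]
    ring
  rw [e2]
  ring

lemma key (j M : ℕ) (a c : ℝ) :
    (a+1) * (a-c+2) * ∑ q ∈ range (j+1),
        (-1:ℝ)^q * poch (a+2) q * poch (a+(q:ℝ)+1) M * poch (c+(q:ℝ)+(M:ℝ)) (j-q)
          / (q.factorial * (j-q).factorial)
      = (-1)^j * gbinom (a-c+2) j * poch (a+1) M * ((a+1)*(a-c+2) + (j:ℝ)*(M:ℝ)) := by
  have swap : ∀ q : ℕ, (a+1) * (poch (a+2) q * poch (a+(q:ℝ)+1) M)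
      = ((a+1)+(q:ℝ)) * (poch (a+1) M * poch ((a+1)+(M:ℝ)) q) := by
    intro q
    have h1 : (a+1) * poch (a+2) q = poch (a+1) q * ((a+1)+(q:ℝ)) := by
      have := poch_succ' (a+1) q
      have h2 := poch_succ (a+1) q
      rw [this] at h2
      have harg : a+1+1 = a+2 := by ring
      rw [harg] at h2
      linarith [h2]
    have h3 : poch (a+1) q * poch ((a+1)+(q:ℝ)) M = poch (a+1) M * poch ((a+1)+(M:ℝ)) q := by
      rw [← poch_add, ← poch_add, add_comm q M]
    have harg2 : a+(q:ℝ)+1 = (a+1)+(q:ℝ) := by ring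
    rw [harg2]
    linear_combination poch ((a+1)+(q:ℝ)) M * h1 + ((a+1)+(q:ℝ)) * h3
  have main : (a+1) * ∑ q ∈ range (j+1),
        (-1:ℝ)^q * poch (a+2) q * poch (a+(q:ℝ)+1) M * poch (c+(q:ℝ)+(M:ℝ)) (j-q)
          / (q.factorial * (j-q).factorial)
      = poch (a+1) M * ∑ q ∈ range (j+1),
        (-1:ℝ)^q * ((a+1)+(q:ℝ)) * poch ((a+1)+(M:ℝ)) q * poch ((c+(M:ℝ))+(q:ℝ)) (j-q)
          / (q.factorial * (j-q).factorial) := by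
    rw [Finset.mul_sum, Finset.mul_sum]
    refine Finset.sum_congr rfl fun q hq => ?_
    have := swap q
    have harg3 : c+(q:ℝ)+(M:ℝ) = (c+(M:ℝ))+(q:ℝ) := by ring
    rw [harg3]
    field_simp
    linear_combination poch ((c+(M:ℝ))+(q:ℝ)) (j-q) * this
  have lhs_eq : (a+1) * (a-c+2) * ∑ q ∈ range (j+1),
        (-1:ℝ)^q * poch (a+2) q * poch (a+(q:ℝ)+1) M * poch (c+(q:ℝ)+(M:ℝ)) (j-q)
          / (q.factorial * (j-q).factorial)
      = (a-c+2) * (poch (a+1) M * ∑ q ∈ range (j+1),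
        (-1:ℝ)^q * ((a+1)+(q:ℝ)) * poch ((a+1)+(M:ℝ)) q * poch ((c+(M:ℝ))+(q:ℝ)) (j-q)
          / (q.factorial * (j-q).factorial)) := by
    rw [← main]; ring
  rw [lhs_eq]
  match j with
  | 0 =>
    simp [poch_zero, gbinom]
    ring
  | (j+1) =>
    rw [qsum_succ j (a+1) ((a+1)+(M:ℝ)) (c+(M:ℝ))]
    have hD : c+(M:ℝ) - ((a+1)+(M:ℝ)) = (c-a-2)+1 := by ring
    rw [hD]
    have hgb : (-1:ℝ)^(j+1) * gbinom (a-c+2) (j+1) = poch (c-a-2) (j+1) / (j+1).factorial := by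
      rw [gb_reflect]
      have : -(a-c+2) = c-a-2 := by ring
      rw [this]
    have hrw : (-1:ℝ)^(j+1) * gbinom (a-c+2) (j+1) * poch (a+1) M * ((a+1)*(a-c+2) + ((j+1:ℕ):ℝ)*(M:ℝ))
        = poch (c-a-2) (j+1) / (j+1).factorial * poch (a+1) M * ((a+1)*(a-c+2) + ((j+1:ℕ):ℝ)*(M:ℝ)) := by
      rw [hgb]
    rw [hrw, poch_succ ((c-a-2)+1) j, poch_succ' (c-a-2) j]
    have hf : ((j+1).factorial : ℝ) = ((j:ℝ)+1) * (j.factorial : ℝ) := by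
      rw [Nat.factorial_succ]; push_cast; ring
    rw [hf]
    have h1 : (j.factorial : ℝ) ≠ 0 := Nat.cast_ne_zero.mpr j.factorial_ne_zero
    have h2 : ((j:ℝ)+1) ≠ 0 := by positivity
    field_simp
    push_cast
    ring

lemma tri (n : ℕ) (f : ℕ → ℕ → ℝ) :
    ∑ k ∈ range (n+1), ∑ q ∈ range (k+1), f k q
      = ∑ q ∈ range (n+1), ∑ s ∈ range (n-q+1), f (q+s) q := by
  induction n with
  | zero => simp
  | succ n ih =>
    rw [Finset.sum_range_succ]
    rw [Finset.sum_range_succ (fun q => ∑ s ∈ range (n+1-q+1), f (q+s) q) (n+1)]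
    have inner : ∀ q ∈ range (n+1), ∑ s ∈ range (n+1-q+1), f (q+s) q
        = ∑ s ∈ range (n-q+1), f (q+s) q + f (n+1) q := by
      intro q hq
      have hq' : q ≤ n := by simpa [Nat.lt_succ_iff] using hq
      have h : n+1-q+1 = (n-q+1)+1 := by omega
      rw [h, Finset.sum_range_succ]
      have h2 : q+(n-q+1) = n+1 := by omega
      rw [h2]
    rw [Finset.sum_congr rfl inner, Finset.sum_add_distrib, ih]
    have h3 : n+1-(n+1)+1 = 1 := by omega
    rw [h3, Finset.sum_range_one, Finset.sum_range_succ]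
    rw [Finset.sum_range_succ (fun q => f (n+1) q) (n+1)]
    simp [add_assoc]

lemma tri2 (m : ℕ) (f : ℕ → ℕ → ℝ) :
    ∑ s ∈ range (m+1), ∑ p ∈ range (m-s+1), f s p
      = ∑ p ∈ range (m+1), ∑ s ∈ range (m-p+1), f s p := by
  have h1 := tri m (fun k q => f q (k-q))
  have h2 := tri m (fun k q => f (k-q) q)
  simp only [add_tsub_cancel_left] at h1 h2
  have mid : ∑ k ∈ range (m+1), ∑ q ∈ range (k+1), f q (k-q)
      = ∑ k ∈ range (m+1), ∑ q ∈ range (k+1), f (k-q) q := by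
    refine Finset.sum_congr rfl fun k hk => ?_
    rw [← Finset.sum_range_reflect (fun q => f (k-q) q) (k+1)]
    refine Finset.sum_congr rfl fun q hq => ?_
    have hq' : q ≤ k := by simpa [Nat.lt_succ_iff] using hq
    have e2 : k+1-1-q = k-q := by omega
    rw [e2]
    have e1 : k - (k-q) = q := by omega
    rw [e1]
  rw [← h1, mid, h2]


section star
variable (i : ℕ) (a c x : ℝ)

noncomputable def tt (i : ℕ) (a c x : ℝ) (k p q : ℕ) : ℝ :=
  poch (a+2) k * poch (c+(k:ℝ)) (i-k)
    * (x^p * poch (-a-(i:ℝ)+(p:ℝ)) (i-k-p) / ((i-k-p).factorial * p.factorial))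
    * ((-1:ℝ)^q * poch (a+(q:ℝ)+1) (k-q) / ((k-q).factorial * q.factorial) * x^q)

lemma stepA :
    ∑ k ∈ range (i+1), poch (a+2) k * poch (c+(k:ℝ)) (i-k) * Lag (i-k) (-a-(i:ℝ)-1) (-x) * Lag k a x
      = ∑ k ∈ range (i+1), ∑ q ∈ range (k+1), ∑ p ∈ range (i-k+1), tt i a c x k p q := by
  refine Finset.sum_congr rfl fun k hk => ?_
  unfold Lag
  rw [Finset.mul_sum]
  refine Finset.sum_congr rfl fun q hq => ?_
  rw [show poch (a+2) k * poch (c+(k:ℝ)) (i-k)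
        * (∑ p ∈ range (i-k+1), (-1:ℝ)^p * poch (-a-(i:ℝ)-1+p+1) (i-k-p) / (i-k-p).factorial * (-x)^p / p.factorial)
        * ((-1:ℝ)^q * poch (a+q+1) (k-q) / (k-q).factorial * x^q / q.factorial)
      = (∑ p ∈ range (i-k+1), (-1:ℝ)^p * poch (-a-(i:ℝ)-1+p+1) (i-k-p) / (i-k-p).factorial * (-x)^p / p.factorial)
        * (poch (a+2) k * poch (c+(k:ℝ)) (i-k) * ((-1:ℝ)^q * poch (a+q+1) (k-q) / (k-q).factorial * x^q / q.factorial))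
      from by ring, Finset.sum_mul]
  refine Finset.sum_congr rfl fun p hp => ?_
  unfold tt
  have harg : -a-(i:ℝ)-1+(p:ℝ)+1 = -a-(i:ℝ)+(p:ℝ) := by ring
  rw [harg, neg_pow x p]
  have hsq : (-1:ℝ)^p * (-1)^p = 1 := by
    rw [← pow_add]; exact Even.neg_one_pow ⟨p, rfl⟩
  field_simp
  linear_combination (poch (a+2) k * poch (c+(k:ℝ)) (i-k) * poch (-a-(i:ℝ)+(p:ℝ)) (i-k-p)
    * poch (a+(q:ℝ)+1) (k-q) * x^p * x^q) * hsq

noncomputable def ww (i : ℕ) (a c x : ℝ) (q p : ℕ) : ℝ :=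
  (-1:ℝ)^q * x^(p+q) / (q.factorial * p.factorial) * poch (a+2) q
    * poch (a+(q:ℝ)+1) (i-q-p) * poch (c+(q:ℝ)+((i-q-p:ℕ):ℝ)) p * gbinom (a-c+2) (i-q-p)

lemma stepE (q p : ℕ) (hq : q ≤ i) (hp : p ≤ i - q) :
    ∑ s ∈ range ((i-q-p)+1), tt i a c x (q+s) p q = ww i a c x q p := by
  have hqp : q + p ≤ i := by omega
  set m := i - q - p with hm0
  have per_s : ∀ s ∈ range (m+1), tt i a c x (q+s) p q
      = ((-1:ℝ)^q * x^(p+q) / (q.factorial * p.factorial) * poch (a+2) q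
          * poch (a+(q:ℝ)+1) m * poch (c+(q:ℝ)+(m:ℝ)) p)
        * ((-1:ℝ)^(m-s) * poch (a+(q:ℝ)+2) s * poch ((c+(q:ℝ))+(s:ℝ)) (m-s)
            / ((m-s).factorial * s.factorial)) := by
    intro s hs
    have hs' : s ≤ m := by simpa [Nat.lt_succ_iff] using hs
    have hms : ((m-s:ℕ):ℝ) = (m:ℝ) - s := Nat.cast_sub hs'
    have hmr : (m:ℝ) = (i:ℝ) - q - p := by
      have h : q+p+m = i := by omega
      have := congrArg (Nat.cast : ℕ → ℝ) h
      push_cast at this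
      linarith
    unfold tt
    have e2 : i-(q+s)-p = m-s := by omega
    have e1 : i-(q+s) = (m-s)+p := by omega
    have e3 : q+s-q = s := by omega
    rw [e2, e1, e3]
    rw [poch_add (a+2) q s, poch_add (c+((q+s:ℕ):ℝ)) (m-s) p]
    rw [poch_reflect (-a-(i:ℝ)+(p:ℝ)) (m-s)]
    have harg3 : -(-a-(i:ℝ)+(p:ℝ))-((m-s:ℕ):ℝ)+1 = a+(q:ℝ)+1+(s:ℝ) := by
      rw [hms, hmr]; ring
    rw [harg3]
    have harg5 : c+((q+s:ℕ):ℝ) = c+(q:ℝ)+(s:ℝ) := by push_cast; ring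
    rw [harg5]
    have harg2 : c+(q:ℝ)+(s:ℝ)+((m-s:ℕ):ℝ) = c+(q:ℝ)+(m:ℝ) := by rw [hms]; ring
    rw [harg2]
    have e4 : s+(m-s) = m := by omega
    have r5 := poch_add (a+(q:ℝ)+1) s (m-s)
    rw [e4] at r5
    rw [r5]
    have harg4 : a+2+(q:ℝ) = a+(q:ℝ)+2 := by ring
    rw [harg4]
    ring
  rw [Finset.sum_congr rfl per_s, ← Finset.mul_sum, cv_div' m (a+(q:ℝ)+2) (c+(q:ℝ))]
  have harg6 : a+(q:ℝ)+2-(c+(q:ℝ))-(m:ℝ)+1 = a-c+2-(m:ℝ)+1 := by ring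
  rw [harg6]
  unfold ww gbinom
  ring

lemma stepCD :
    ∑ k ∈ range (i+1), ∑ q ∈ range (k+1), ∑ p ∈ range (i-k+1), tt i a c x k p q
      = ∑ q ∈ range (i+1), ∑ p ∈ range (i-q+1), ww i a c x q p := by
  rw [tri i (fun k q => ∑ p ∈ range (i-k+1), tt i a c x k p q)]
  refine Finset.sum_congr rfl fun q hq => ?_
  have hq' : q ≤ i := by simpa [Nat.lt_succ_iff] using hq
  have inner : ∀ s ∈ range (i-q+1),
      (∑ p ∈ range (i-(q+s)+1), tt i a c x (q+s) p q)
        = ∑ p ∈ range ((i-q)-s+1), tt i a c x (q+s) p q := by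
    intro s hs
    rw [Nat.sub_add_eq]
  rw [Finset.sum_congr rfl inner, tri2 (i-q) (fun s p => tt i a c x (q+s) p q)]
  refine Finset.sum_congr rfl fun p hp => ?_
  have hp' : p ≤ i - q := by simpa [Nat.lt_succ_iff] using hp
  exact stepE i a c x q p hq' hp'

lemma stepF :
    ∑ j ∈ range (i+1), (-1:ℝ)^j * gbinom (a-c+2) j * gbinom (a-c+2) (i-j) * poch (a+1) (i-j)
        * ((a+1)*(a-c+2) + (j:ℝ)*((i:ℝ)-(j:ℝ))) * x^j
      = (a+1)*(a-c+2) * ∑ q ∈ range (i+1), ∑ p ∈ range (i-q+1), ww i a c x q p := by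
  have per_j : ∀ j ∈ range (i+1),
      (-1:ℝ)^j * gbinom (a-c+2) j * gbinom (a-c+2) (i-j) * poch (a+1) (i-j)
          * ((a+1)*(a-c+2) + (j:ℝ)*((i:ℝ)-(j:ℝ))) * x^j
        = (a+1)*(a-c+2) * ∑ q ∈ range (j+1), (gbinom (a-c+2) (i-j) * x^j)
            * ((-1:ℝ)^q * poch (a+2) q * poch (a+(q:ℝ)+1) (i-j) * poch (c+(q:ℝ)+((i-j:ℕ):ℝ)) (j-q)
              / (q.factorial * (j-q).factorial)) := by
    intro j hj
    have hj' : j ≤ i := by simpa [Nat.lt_succ_iff] using hj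
    have hcast : (i:ℝ) - (j:ℝ) = ((i-j:ℕ):ℝ) := (Nat.cast_sub hj').symm
    rw [hcast, ← Finset.mul_sum]
    have hk := key j (i-j) a c
    linear_combination (-(gbinom (a-c+2) (i-j) * x^j)) * hk
  rw [Finset.sum_congr rfl per_j, ← Finset.mul_sum]
  congr 1
  rw [tri i (fun j q => (gbinom (a-c+2) (i-j) * x^j)
            * ((-1:ℝ)^q * poch (a+2) q * poch (a+(q:ℝ)+1) (i-j) * poch (c+(q:ℝ)+((i-j:ℕ):ℝ)) (j-q)
              / (q.factorial * (j-q).factorial)))]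
  refine Finset.sum_congr rfl fun q hq => Finset.sum_congr rfl fun p hp => ?_
  have e1 : i - (q+p) = i - q - p := Nat.sub_add_eq i q p
  have e2 : q+p-q = p := by omega
  rw [e1, e2]
  unfold ww
  ring

lemma star :
    (a+1)*(a-c+2) * ∑ k ∈ range (i+1),
        poch (a+2) k * poch (c+(k:ℝ)) (i-k) * Lag (i-k) (-a-(i:ℝ)-1) (-x) * Lag k a x
      = ∑ j ∈ range (i+1),
        (-1:ℝ)^j * gbinom (a-c+2) j * gbinom (a-c+2) (i-j) * poch (a+1) (i-j)
          * ((a+1)*(a-c+2) + (j:ℝ)*((i:ℝ)-(j:ℝ))) * x^j := by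
  rw [stepA, stepCD, stepF]

end star


theorem G_polynomial_formula (a c : ℝ) (i : ℕ) (x : ℝ)
    (h1 : a + 1 ≠ 0) (h2 : a - c + 2 ≠ 0) :
    ∑ k ∈ range (i + 1),
        poch (a + 2) k / Real.Gamma (c + k) * Lag (i - k) (-a - i - 1) (-x) * Lag k a x
      = 1 / ((a + 1) * (a - c + 2) * Real.Gamma (c + i)) *
        ∑ j ∈ range (i + 1),
          (-1 : ℝ) ^ j * gbinom (a - c + 2) j * gbinom (a - c + 2) (i - j)
            * poch (a + 1) (i - j) * ((a + 1) * (a - c + 2) + (j : ℝ) * ((i : ℝ) - j))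
            * x ^ j := by
  have hΓ : ∀ k ∈ range (i+1),
      poch (a+2) k / Real.Gamma (c+(k:ℝ)) * Lag (i-k) (-a-(i:ℝ)-1) (-x) * Lag k a x
        = (Real.Gamma (c+(i:ℝ)))⁻¹
          * (poch (a+2) k * poch (c+(k:ℝ)) (i-k) * Lag (i-k) (-a-(i:ℝ)-1) (-x) * Lag k a x) := by
    intro k hk
    have hk' : k ≤ i := by simpa [Nat.lt_succ_iff] using hk
    have hg := inv_gamma_poch (c+(k:ℝ)) (i-k)
    have harg : c+(k:ℝ)+((i-k:ℕ):ℝ) = c+(i:ℝ) := by rw [Nat.cast_sub hk']; ring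
    rw [harg] at hg
    rw [div_eq_mul_inv, hg]
    ring
  rw [Finset.sum_congr rfl hΓ, ← Finset.mul_sum, ← star i a c x]
  set u := (a+1)*(a-c+2) with hu
  have h12 : u ≠ 0 := mul_ne_zero h1 h2
  set G := Real.Gamma (c+(i:ℝ))
  set S := ∑ k ∈ range (i+1),
        poch (a+2) k * poch (c+(k:ℝ)) (i-k) * Lag (i-k) (-a-(i:ℝ)-1) (-x) * Lag k a x
  rw [one_div, mul_inv]
  rw [show u⁻¹ * G⁻¹ * (u * S) = (u⁻¹*u) * (G⁻¹*S) from by ring, inv_mul_cancel₀ h12, one_mul]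
end

section
/- Let \(b_i^*(x) = \frac{1}{i!}\sum_{j=0}^i(-1)^j\binom{i}{j}(\alpha+1)_{i-j}x^j\) for \(i \ge 1\). Then for every real \(\alpha\), every integer \(n \ge 1\), and every nonnegative integer \(k \le n\), \(\sum_{i=1}^{\infty} b_i^*(x)\, D^{i+k} L_n^{(\alpha)}(x) = \frac{(-n)_k}{n\,\Gamma(k)} - D^k L_n^{(\alpha)}(x)\), where the sum is finite (terms vanish for \(i+k>n\)) and \(1/\Gamma(k)\) is interpreted as 0 when k = 0. -/
open Finset

lemma poch_succ_right (x : ℝ) (k : ℕ) : poch x (k+1) = poch x k * (x + k) := by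
  simp [poch, ascPochhammer_succ_eval]

lemma poch_succ_left (x : ℝ) (k : ℕ) : poch x (k+1) = x * poch (x+1) k := by
  simp [poch, ascPochhammer_succ_left, Polynomial.eval_comp]

lemma Tlem (m : ℕ) : ∀ (a k : ℝ),
    ∑ i ∈ range (m+1), (-1:ℝ)^i * (m.choose i : ℝ) * poch (a+1) i * poch (a+i+k+1) (m-i)
      = poch k m := by
  induction m with
  | zero => intro a k; simp [poch_zero]
  | succ m ih =>
    intro a k
    have split : ∑ i ∈ range (m+2), (-1:ℝ)^i * ((m+1).choose i : ℝ) * poch (a+1) i * poch (a+i+k+1) (m+1-i)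
        = (∑ i ∈ range (m+1), (-1:ℝ)^(i+1) * ((m+1).choose (i+1) : ℝ) * poch (a+1) (i+1) * poch (a+(i+1 : ℕ)+k+1) (m-i))
          + poch (a+k+1) (m+1) := by
      rw [Finset.sum_range_succ' (fun i => (-1:ℝ)^i * ((m+1).choose i : ℝ) * poch (a+1) i * poch (a+i+k+1) (m+1-i)) (m+1)]
      simp [poch_zero]
    have pascal : ∀ i : ℕ, (((m+1).choose (i+1) : ℕ) : ℝ) = (m.choose i : ℝ) + (m.choose (i+1) : ℝ) := by
      intro i; exact_mod_cast congrArg (Nat.cast : ℕ → ℝ) (Nat.choose_succ_succ m i)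
    have split2 : (∑ i ∈ range (m+1), (-1:ℝ)^(i+1) * ((m+1).choose (i+1) : ℝ) * poch (a+1) (i+1) * poch (a+(i+1 : ℕ)+k+1) (m-i))
        = (∑ i ∈ range (m+1), (-1:ℝ)^(i+1) * (m.choose i : ℝ) * poch (a+1) (i+1) * poch (a+(i+1 : ℕ)+k+1) (m-i))
          + (∑ i ∈ range (m+1), (-1:ℝ)^(i+1) * (m.choose (i+1) : ℝ) * poch (a+1) (i+1) * poch (a+(i+1 : ℕ)+k+1) (m-i)) := by
      rw [← Finset.sum_add_distrib]
      refine Finset.sum_congr rfl (fun i _ => ?_)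
      rw [pascal i]; ring
    have hW : (∑ i ∈ range (m+1), (-1:ℝ)^(i+1) * (m.choose (i+1) : ℝ) * poch (a+1) (i+1) * poch (a+(i+1 : ℕ)+k+1) (m-i))
          + poch (a+k+1) (m+1)
        = ∑ j ∈ range (m+2), (-1:ℝ)^j * (m.choose j : ℝ) * poch (a+1) j * poch (a+j+k+1) (m+1-j) := by
      rw [Finset.sum_range_succ' (fun j => (-1:ℝ)^j * (m.choose j : ℝ) * poch (a+1) j * poch (a+j+k+1) (m+1-j)) (m+1)]
      simp [poch_zero]
    have hWdrop : (∑ j ∈ range (m+2), (-1:ℝ)^j * (m.choose j : ℝ) * poch (a+1) j * poch (a+j+k+1) (m+1-j))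
        = ∑ j ∈ range (m+1), (-1:ℝ)^j * (m.choose j : ℝ) * poch (a+1) j * ((a+j+k+1) * poch (a+j+k+2) (m-j)) := by
      rw [Finset.sum_range_succ]
      simp only [Nat.choose_succ_self, Nat.cast_zero]
      rw [mul_zero, zero_mul, zero_mul, add_zero]
      refine Finset.sum_congr rfl (fun j hj => ?_)
      have hj' : j ≤ m := Nat.lt_succ_iff.mp (Finset.mem_range.mp hj)
      have e1 : m + 1 - j = (m - j) + 1 := by omega
      rw [e1, poch_succ_left]
      have e2 : a + (j:ℝ) + k + 1 + 1 = a + (j:ℝ) + k + 2 := by ring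
      rw [e2]
    -- combine
    rw [split, split2, add_assoc, hW, hWdrop]
    have hY : (∑ i ∈ range (m+1), (-1:ℝ)^(i+1) * (m.choose i : ℝ) * poch (a+1) (i+1) * poch (a+(i+1 : ℕ)+k+1) (m-i))
        = ∑ i ∈ range (m+1), (-1:ℝ)^i * (m.choose i : ℝ) * poch (a+1) i * (-(a+1+i) * poch (a+i+k+2) (m-i)) := by
      refine Finset.sum_congr rfl (fun i _ => ?_)
      rw [poch_succ_right]
      have e3 : a + ((i+1 : ℕ) : ℝ) + k + 1 = a + (i:ℝ) + k + 2 := by push_cast; ring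
      rw [e3]
      ring
    rw [hY, ← Finset.sum_add_distrib]
    have hfin : ∑ i ∈ range (m+1), ((-1:ℝ)^i * (m.choose i : ℝ) * poch (a+1) i * (-(a+1+i) * poch (a+i+k+2) (m-i))
          + (-1:ℝ)^i * (m.choose i : ℝ) * poch (a+1) i * ((a+i+k+1) * poch (a+i+k+2) (m-i)))
        = k * ∑ i ∈ range (m+1), (-1:ℝ)^i * (m.choose i : ℝ) * poch (a+1) i * poch (a+i+(k+1)+1) (m-i) := by
      rw [Finset.mul_sum]
      refine Finset.sum_congr rfl (fun i _ => ?_)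
      have e4 : a + (i:ℝ) + (k+1) + 1 = a + (i:ℝ) + k + 2 := by ring
      rw [e4]; ring
    rw [hfin, ih a (k+1), ← poch_succ_left]


lemma Lag_zero_eq (a x : ℝ) : Lag 0 a x = 1 := by simp [Lag, poch_zero]

lemma Lag_hasDerivAt (n : ℕ) (a : ℝ) (x : ℝ) :
    HasDerivAt (Lag (n+1) a) (-(Lag n (a+1) x)) x := by
  have h : ∀ k ∈ range (n+2), HasDerivAt
      (fun x : ℝ => (-1:ℝ)^k * poch (a+k+1) (n+1-k) / (n+1-k).factorial * x ^ k / k.factorial)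
      ((-1:ℝ)^k * poch (a+k+1) (n+1-k) / (n+1-k).factorial * ((k:ℝ) * x ^ (k-1)) / k.factorial) x :=
    fun k _ => ((hasDerivAt_pow k x).const_mul _).div_const _
  have H := HasDerivAt.sum h
  have hv : ∑ k ∈ range (n+2),
      (-1:ℝ)^k * poch (a+k+1) (n+1-k) / (n+1-k).factorial * ((k:ℝ) * x ^ (k-1)) / k.factorial
      = -(Lag n (a+1) x) := by
    rw [Finset.sum_range_succ' (fun k => (-1:ℝ)^k * poch (a+k+1) (n+1-k) / (n+1-k).factorial * ((k:ℝ) * x ^ (k-1)) / k.factorial) (n+1)]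
    simp only [Nat.cast_zero, zero_mul, mul_zero, zero_div, add_zero]
    rw [Lag, ← Finset.sum_neg_distrib]
    refine Finset.sum_congr rfl (fun k hk => ?_)
    have e0 : n + 1 - (k+1) = n - k := Nat.succ_sub_succ n k
    have e1 : (k+1) - 1 = k := rfl
    rw [e0, e1]
    have e2 : a + ((k:ℝ)+1) + 1 = a + 1 + (k:ℝ) + 1 := by ring
    have e3 : ((k+1).factorial : ℝ) = ((k:ℝ)+1) * (k.factorial : ℝ) := by
      rw [Nat.factorial_succ]; push_cast; ring
    push_cast
    rw [e2, e3]
    have hk0 : (k.factorial : ℝ) ≠ 0 := Nat.cast_ne_zero.mpr k.factorial_ne_zero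
    have hk1 : ((k:ℝ)+1) ≠ 0 := by positivity
    field_simp
    ring
  rw [hv] at H
  rw [Finset.sum_fn] at H
  exact H

noncomputable def Bf (α : ℝ) (i : ℕ) (x : ℝ) : ℝ :=
  1 / (i.factorial : ℝ) *
    ∑ j ∈ range (i + 1), (-1 : ℝ) ^ j * (i.choose j : ℝ) * poch (α + 1) (i - j) * x ^ j

lemma Bf_zero_eq (α x : ℝ) : Bf α 0 x = 1 := by simp [Bf, poch_zero]

lemma Bf_hasDerivAt (α : ℝ) (i : ℕ) (x : ℝ) :
    HasDerivAt (Bf α (i+1)) (-(Bf α i x)) x := by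
  have h : ∀ j ∈ range (i+2), HasDerivAt
      (fun x : ℝ => (-1:ℝ)^j * ((i+1).choose j : ℝ) * poch (α+1) (i+1-j) * x ^ j)
      ((-1:ℝ)^j * ((i+1).choose j : ℝ) * poch (α+1) (i+1-j) * ((j:ℝ) * x ^ (j-1))) x :=
    fun j _ => (hasDerivAt_pow j x).const_mul _
  have H := (HasDerivAt.sum h).const_mul (1 / ((i+1).factorial : ℝ))
  have hv : 1 / (((i+1).factorial : ℕ) : ℝ) * ∑ j ∈ range (i+2),
      (-1:ℝ)^j * ((i+1).choose j : ℝ) * poch (α+1) (i+1-j) * ((j:ℝ) * x ^ (j-1))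
      = -(Bf α i x) := by
    rw [Finset.sum_range_succ' (fun j => (-1:ℝ)^j * ((i+1).choose j : ℝ) * poch (α+1) (i+1-j) * ((j:ℝ) * x ^ (j-1))) (i+1)]
    simp only [Nat.cast_zero, zero_mul, mul_zero, add_zero]
    rw [Bf, Finset.mul_sum, Finset.mul_sum, ← Finset.sum_neg_distrib]
    refine Finset.sum_congr rfl (fun j hj => ?_)
    have e0 : i + 1 - (j+1) = i - j := Nat.succ_sub_succ i j
    have e1 : (j+1) - 1 = j := rfl
    rw [e0, e1]
    have hc : (((i+1).choose (j+1) : ℕ) : ℝ) * ((j:ℝ)+1) = ((i:ℝ)+1) * (i.choose j : ℝ) := by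
      exact_mod_cast congrArg (Nat.cast : ℕ → ℝ) (Nat.add_one_mul_choose_eq i j).symm
    have e3 : (((i+1).factorial : ℕ) : ℝ) = ((i:ℝ)+1) * (i.factorial : ℝ) := by
      rw [Nat.factorial_succ]; push_cast; ring
    have hi0 : (i.factorial : ℝ) ≠ 0 := Nat.cast_ne_zero.mpr i.factorial_ne_zero
    have hi1 : ((i:ℝ)+1) ≠ 0 := by positivity
    rw [e3]
    push_cast
    field_simp
    linear_combination (-(1:ℝ)) * (-1:ℝ)^j * poch (α+1) (i-j) * x^j * hc
  rw [hv] at H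
  rw [Finset.sum_fn] at H
  exact H

lemma Bf_hasDerivAt_all (α : ℝ) (i : ℕ) (x : ℝ) :
    HasDerivAt (Bf α i) (if i = 0 then 0 else -(Bf α (i-1) x)) x := by
  cases i with
  | zero =>
      have h1 : Bf α 0 = fun _ : ℝ => (1:ℝ) := funext (Bf_zero_eq α)
      rw [if_pos rfl, h1]
      exact hasDerivAt_const x 1
  | succ i => simpa using Bf_hasDerivAt α i x

lemma Lag_hasDerivAt_all (n : ℕ) (a : ℝ) (x : ℝ) :
    HasDerivAt (Lag n a) (if n = 0 then 0 else -(Lag (n-1) (a+1) x)) x := by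
  cases n with
  | zero =>
      have h1 : Lag 0 a = fun _ : ℝ => (1:ℝ) := funext (Lag_zero_eq a)
      rw [if_pos rfl, h1]
      exact hasDerivAt_const x 1
  | succ n => simpa using Lag_hasDerivAt n a x

lemma Bf_at_zero (α : ℝ) (i : ℕ) : Bf α i 0 = poch (α+1) i / i.factorial := by
  rw [Bf, Finset.sum_eq_single 0]
  · simp [poch]; exact inv_mul_eq_div _ _
  · intro j _ hj
    rw [zero_pow hj, mul_zero]
  · intro h; exact absurd (Finset.mem_range.mpr (Nat.succ_pos i)) h

lemma Lag_at_zero (n : ℕ) (a : ℝ) : Lag n a 0 = poch (a+1) n / n.factorial := by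
  rw [Lag, Finset.sum_eq_single 0]
  · simp
  · intro j _ hj
    rw [zero_pow hj, mul_zero, zero_div]
  · intro h; exact absurd (Finset.mem_range.mpr (Nat.succ_pos n)) h

lemma keyId (α : ℝ) (m : ℕ) (β : ℝ) (x : ℝ) :
    ∑ i ∈ range (m+1), Bf α i x * ((-1:ℝ)^i * Lag (m-i) (β+i) x)
      = poch (β-α) m / m.factorial := by
  set F : ℝ → ℝ := fun y => ∑ i ∈ range (m+1), Bf α i y * ((-1:ℝ)^i * Lag (m-i) (β+i) y) with hFdef
  have hF : ∀ y, HasDerivAt F 0 y := by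
    intro y
    have h : ∀ i ∈ range (m+1), HasDerivAt
        (fun y => Bf α i y * ((-1:ℝ)^i * Lag (m-i) (β+i) y))
        ((if i = 0 then 0 else -(Bf α (i-1) y)) * ((-1:ℝ)^i * Lag (m-i) (β+i) y)
          + Bf α i y * ((-1:ℝ)^i * (if m - i = 0 then 0 else -(Lag (m-i-1) (β+i+1) y)))) y := by
      intro i _
      have hB := Bf_hasDerivAt_all α i y
      have hL := (Lag_hasDerivAt_all (m-i) (β+i) y).const_mul ((-1:ℝ)^i)
      exact hB.mul hL
    have H := HasDerivAt.sum h
    have hz : ∑ i ∈ range (m+1),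
        ((if i = 0 then 0 else -(Bf α (i-1) y)) * ((-1:ℝ)^i * Lag (m-i) (β+i) y)
          + Bf α i y * ((-1:ℝ)^i * (if m - i = 0 then 0 else -(Lag (m-i-1) (β+i+1) y)))) = 0 := by
      rw [Finset.sum_add_distrib]
      have h1 : ∑ i ∈ range (m+1),
          (if i = 0 then 0 else -(Bf α (i-1) y)) * ((-1:ℝ)^i * Lag (m-i) (β+i) y)
          = ∑ i ∈ range m, -(Bf α i y) * ((-1:ℝ)^(i+1) * Lag (m-(i+1)) (β+((i+1:ℕ):ℝ)) y) := by
        rw [Finset.sum_range_succ' (fun i => (if i = 0 then 0 else -(Bf α (i-1) y)) * ((-1:ℝ)^i * Lag (m-i) (β+i) y)) m]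
        simp
      have h2 : ∑ i ∈ range (m+1),
          Bf α i y * ((-1:ℝ)^i * (if m - i = 0 then 0 else -(Lag (m-i-1) (β+i+1) y)))
          = ∑ i ∈ range m, Bf α i y * ((-1:ℝ)^i * -(Lag (m-i-1) (β+i+1) y)) := by
        rw [Finset.sum_range_succ]
        rw [Nat.sub_self, if_pos rfl]
        rw [mul_zero, mul_zero, add_zero]
        refine Finset.sum_congr rfl (fun i hi => ?_)
        have : m - i ≠ 0 := by have := Finset.mem_range.mp hi; omega
        rw [if_neg this]
      rw [h1, h2, ← Finset.sum_add_distrib]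
      refine Finset.sum_eq_zero (fun i _ => ?_)
      have e1 : m - (i+1) = m - i - 1 := by omega
      have e2 : β + ((i+1:ℕ):ℝ) = β + (i:ℝ) + 1 := by push_cast; ring
      rw [e1, e2]
      ring
    rw [hz] at H
    rw [Finset.sum_fn] at H
    exact H
  have hconst : F x = F 0 :=
    is_const_of_deriv_eq_zero (fun y => (hF y).differentiableAt) (fun y => (hF y).deriv) x 0
  have hF0 : F 0 = poch (β-α) m / m.factorial := by
    have hm0 : (m.factorial : ℝ) ≠ 0 := Nat.cast_ne_zero.mpr m.factorial_ne_zero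
    rw [hFdef]
    simp only
    rw [eq_div_iff hm0, Finset.sum_mul]
    have : ∀ i ∈ range (m+1),
        Bf α i 0 * ((-1:ℝ)^i * Lag (m-i) (β+i) 0) * (m.factorial : ℝ)
        = (-1:ℝ)^i * (m.choose i : ℝ) * poch (α+1) i * poch (α+i+(β-α)+1) (m-i) := by
      intro i hi
      have him : i ≤ m := Nat.lt_succ_iff.mp (Finset.mem_range.mp hi)
      rw [Bf_at_zero, Lag_at_zero]
      have e : β + (i:ℝ) + 1 = α + (i:ℝ) + (β-α) + 1 := by ring
      rw [e]
      have hc : ((m.choose i : ℕ) : ℝ) * (i.factorial : ℝ) * ((m-i).factorial : ℝ) = (m.factorial : ℝ) := by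
        exact_mod_cast congrArg (Nat.cast : ℕ → ℝ) (Nat.choose_mul_factorial_mul_factorial him)
      have hi0 : (i.factorial : ℝ) ≠ 0 := Nat.cast_ne_zero.mpr i.factorial_ne_zero
      have hmi0 : ((m-i).factorial : ℝ) ≠ 0 := Nat.cast_ne_zero.mpr (m-i).factorial_ne_zero
      field_simp
      linear_combination (-(1:ℝ)) * poch (α+1) i * poch (α+i+(β-α)+1) (m-i) * hc
    rw [Finset.sum_congr rfl this, Tlem m α (β-α)]
  show F x = poch (β-α) m / m.factorial
  rw [hconst, hF0]

lemma iterLag (n : ℕ) (a : ℝ) : ∀ d, d ≤ n →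
    iteratedDeriv d (Lag n a) = fun x => (-1:ℝ)^d * Lag (n-d) (a+d) x := by
  intro d
  induction d with
  | zero =>
      intro _
      funext x
      simp [iteratedDeriv_zero]
  | succ d ihd =>
      intro hd
      rw [iteratedDeriv_succ, ihd (by omega)]
      funext x
      have hnd : n - d = (n - (d+1)) + 1 := by omega
      have hL := Lag_hasDerivAt (n-(d+1)) (a+d) x
      rw [← hnd] at hL
      rw [(hL.const_mul ((-1:ℝ)^d)).deriv]
      have e : a + (d:ℝ) + 1 = a + ((d+1:ℕ):ℝ) := by push_cast; ring
      rw [← e]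
      ring

lemma iterLag_zero (n : ℕ) (a : ℝ) : ∀ j, iteratedDeriv (n+1+j) (Lag n a) = fun _ => (0:ℝ) := by
  intro j
  induction j with
  | zero =>
      rw [iteratedDeriv_succ, iterLag n a n le_rfl]
      have h1 : (fun x : ℝ => (-1:ℝ)^n * Lag (n-n) (a+n) x) = fun _ : ℝ => (-1:ℝ)^n := by
        funext y; rw [Nat.sub_self, Lag_zero_eq]; ring
      rw [h1]
      funext x
      simp
  | succ j ihj =>
      have e : n+1+(j+1) = (n+1+j)+1 := rfl
      rw [e, iteratedDeriv_succ, ihj]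
      funext x
      simp

lemma poch_nat_fac (k' : ℕ) : ∀ m : ℕ, poch ((k':ℝ)+1) m * (k'.factorial : ℝ) = ((k'+m).factorial : ℝ) := by
  intro m
  induction m with
  | zero => simp [poch_zero]
  | succ m ih =>
      rw [poch_succ_right]
      have e : (k'+(m+1)).factorial = (k'+m).factorial * (k'+m+1) := by
        rw [show k'+(m+1) = (k'+m)+1 from rfl, Nat.factorial_succ]; ring
      rw [e]
      push_cast
      linear_combination ((k':ℝ) + 1 + m) * ih

lemma poch_neg_fac (n : ℕ) : ∀ k, k ≤ n → poch (-(n:ℝ)) k * ((n-k).factorial : ℝ) = (-1:ℝ)^k * (n.factorial : ℝ) := by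
  intro k
  induction k with
  | zero => intro _; rw [poch_zero]; simp
  | succ k ih =>
      intro hk
      have hk' : k ≤ n := by omega
      have ih' := ih hk'
      have e : n - k = (n-(k+1)) + 1 := by omega
      rw [e, Nat.factorial_succ] at ih'
      have h2 : ((n-(k+1) : ℕ) : ℝ) + 1 = (n:ℝ) - (k:ℝ) := by
        rw [Nat.cast_sub hk]; push_cast; ring
      rw [poch_succ_right]
      push_cast at ih' ⊢
      rw [h2] at ih'
      linear_combination (-1:ℝ) * ih'

lemma rhs_eval (n k : ℕ) (hn : 1 ≤ n) (hk : k ≤ n) :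
    poch (-(n:ℝ)) k / ((n:ℝ) * Real.Gamma k) = (-1:ℝ)^k * (poch (k:ℝ) (n-k) / ((n-k).factorial : ℝ)) := by
  cases k with
  | zero =>
      rw [Nat.cast_zero, Real.Gamma_zero, mul_zero, div_zero]
      have hz : poch 0 (n-0) = 0 := by
        rw [Nat.sub_zero]
        exact ascPochhammer_ne_zero_eval_zero (S := ℝ) (Nat.one_le_iff_ne_zero.mp hn)
      rw [hz]
      simp
  | succ k' =>
      have hG : Real.Gamma ((k'+1 : ℕ) : ℝ) = (k'.factorial : ℝ) := by
        push_cast; exact Real.Gamma_nat_eq_factorial k'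
      rw [hG]
      have h1 := poch_neg_fac n (k'+1) hk
      have h2 := poch_nat_fac k' (n-(k'+1))
      have h3 : ((n:ℝ)) * ((n-1).factorial : ℝ) = (n.factorial : ℝ) := by
        exact_mod_cast congrArg (Nat.cast : ℕ → ℝ) (Nat.mul_factorial_pred (Nat.one_le_iff_ne_zero.mp hn))
      have h4 : k' + (n - (k'+1)) = n - 1 := by omega
      rw [h4] at h2
      have e5 : ((k'+1 : ℕ) : ℝ) = (k':ℝ) + 1 := by push_cast; ring
      rw [e5]
      have hn0 : (n:ℝ) ≠ 0 := Nat.cast_ne_zero.mpr (by omega)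
      have hf1 : (k'.factorial : ℝ) ≠ 0 := Nat.cast_ne_zero.mpr k'.factorial_ne_zero
      have hf2 : ((n-(k'+1)).factorial : ℝ) ≠ 0 := Nat.cast_ne_zero.mpr (n-(k'+1)).factorial_ne_zero
      field_simp
      linear_combination h1 + ((-1:ℝ))^(k') * (n:ℝ) * h2 - ((-1:ℝ))^(k'+1) * h3

theorem bstar_action (α : ℝ) (hα : -1 < α) (n : ℕ) (hn : 1 ≤ n) (k : ℕ) (hk : k ≤ n) (x : ℝ) :
    ∑ i ∈ Icc 1 n,
        (1 / (i.factorial : ℝ) *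
            ∑ j ∈ range (i + 1), (-1 : ℝ) ^ j * (i.choose j : ℝ) * poch (α + 1) (i - j) * x ^ j) *
          iteratedDeriv (i + k) (Lag n α) x
      = poch (-(n : ℝ)) k / ((n : ℝ) * Real.Gamma k) - iteratedDeriv k (Lag n α) x := by
  have key : ∑ i ∈ range (n+1), Bf α i x * iteratedDeriv (i+k) (Lag n α) x
      = (-1:ℝ)^k * (poch (k:ℝ) (n-k) / ((n-k).factorial : ℝ)) := by
    rw [Finset.range_eq_Ico, ← Finset.sum_Ico_consecutive _ (Nat.zero_le (n-k+1)) (by omega : n-k+1 ≤ n+1)]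
    have hzero : ∑ i ∈ Ico (n-k+1) (n+1), Bf α i x * iteratedDeriv (i+k) (Lag n α) x = 0 := by
      refine Finset.sum_eq_zero (fun i hi => ?_)
      have hi' := Finset.mem_Ico.mp hi
      have e : i + k = n + 1 + (i+k-n-1) := by omega
      rw [e, iterLag_zero n α]
      simp
    rw [hzero, add_zero, ← Finset.range_eq_Ico]
    have hmain : ∀ i ∈ range (n-k+1), Bf α i x * iteratedDeriv (i+k) (Lag n α) x
        = (-1:ℝ)^k * (Bf α i x * ((-1:ℝ)^i * Lag ((n-k)-i) (α + (k:ℝ) + (i:ℝ)) x)) := by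
      intro i hi
      have hik : i + k ≤ n := by have := Finset.mem_range.mp hi; omega
      rw [iterLag n α (i+k) hik]
      have e1 : n - (i+k) = (n-k) - i := by omega
      have e2 : α + ((i+k:ℕ):ℝ) = α + (k:ℝ) + (i:ℝ) := by push_cast; ring
      rw [e1, e2, pow_add]
      ring
    rw [Finset.sum_congr rfl hmain, ← Finset.mul_sum, keyId α (n-k) (α+(k:ℝ)) x]
    have e3 : α + (k:ℝ) - α = (k:ℝ) := by ring
    rw [e3]
  have hIcc : ∑ i ∈ range (n+1), Bf α i x * iteratedDeriv (i+k) (Lag n α) x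
      = (∑ i ∈ Icc 1 n, Bf α i x * iteratedDeriv (i+k) (Lag n α) x) + iteratedDeriv k (Lag n α) x := by
    rw [Finset.sum_range_succ' (fun i => Bf α i x * iteratedDeriv (i+k) (Lag n α) x) n]
    rw [Bf_zero_eq, one_mul, zero_add]
    congr 1
    rw [← Finset.Ico_add_one_right_eq_Icc, Finset.sum_Ico_eq_sum_range]
    refine Finset.sum_congr rfl (fun i _ => ?_)
    rw [add_comm 1 i]
  rw [hIcc] at key
  have goalBf : ∑ i ∈ Icc 1 n,
      (1 / (i.factorial : ℝ) *
          ∑ j ∈ range (i + 1), (-1 : ℝ) ^ j * (i.choose j : ℝ) * poch (α + 1) (i - j) * x ^ j) *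
        iteratedDeriv (i + k) (Lag n α) x
      = ∑ i ∈ Icc 1 n, Bf α i x * iteratedDeriv (i+k) (Lag n α) x := rfl
  rw [goalBf, rhs_eval n k hn hk]
  linarith [key]
end
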